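/- Let (R, m) be a commutative local ring, I an ideal of R with I ≠ R, f ∈ R, and S = S(f) the pseudocanonical cover of R via f. Then S is a local ring whose maximal ideal is m_S = {a + b·t : a ∈ m, b ∈ I}; that is, m_S is a proper ideal of S and every element of S not lying in m_S is a unit of S. -/

import Mathlib

open Polynomial

/-- The set `{a + b·t : a ∈ R, b ∈ I}` inside `A = R[T]/(T² − f)`. -/
def pccSet {R : Type*} [CommRing R] (I : Ideal R) (f : R) :
    Set (AdjoinRoot (X ^ 2 - C f)) :=
  {x | ∃ a b : R, b ∈ I ∧
    x = algebraMap R (AdjoinRoot (X ^ 2 - C f)) a +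
        algebraMap R (AdjoinRoot (X ^ 2 - C f)) b * AdjoinRoot.root (X ^ 2 - C f)}

/-- The pseudocanonical cover `S(f) = R + It` of `R` via `f`, as a subring of
`A = R[T]/(T² − f)`. -/
noncomputable def pcc {R : Type*} [CommRing R] (I : Ideal R) (f : R) :
    Subring (AdjoinRoot (X ^ 2 - C f)) where
  carrier := pccSet I f
  one_mem' := ⟨1, 0, I.zero_mem, by simp⟩
  zero_mem' := ⟨0, 0, I.zero_mem, by simp⟩
  add_mem' := by
    rintro x y ⟨a, b, hb, rfl⟩ ⟨c, d, hd, rfl⟩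
    exact ⟨a + c, b + d, I.add_mem hb hd, by simp only [map_add]; ring⟩
  neg_mem' := by
    rintro x ⟨a, b, hb, rfl⟩
    exact ⟨-a, -b, I.neg_mem hb, by simp only [map_neg]; ring⟩
  mul_mem' := by
    rintro x y ⟨a, b, hb, rfl⟩ ⟨c, d, hd, rfl⟩
    refine ⟨a * c + b * d * f, a * d + b * c, I.add_mem (I.mul_mem_left a hd) (I.mul_mem_right c hb), ?_⟩
    have hroot : AdjoinRoot.root (X ^ 2 - C f) ^ 2 =
        algebraMap R (AdjoinRoot (X ^ 2 - C f)) f := by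
      have h := AdjoinRoot.eval₂_root (X ^ 2 - C f)
      simp only [eval₂_sub, eval₂_pow, eval₂_X, eval₂_C, sub_eq_zero] at h
      exact h
    simp only [map_add, map_mul]
    linear_combination (algebraMap R (AdjoinRoot (X ^ 2 - C f)) b *
      algebraMap R (AdjoinRoot (X ^ 2 - C f)) d) * hroot

/-- The canonical ring homomorphism `R → S(f)`. -/
noncomputable def toPcc {R : Type*} [CommRing R] (I : Ideal R) (f : R) :
    R →+* pcc I f :=
  (algebraMap R (AdjoinRoot (X ^ 2 - C f))).codRestrict (pcc I f)
    (fun a => ⟨a, 0, I.zero_mem, by simp⟩)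

/-- The element `u·t` of `S(f)`, for `u ∈ I`. -/
noncomputable def utElem {R : Type*} [CommRing R] (I : Ideal R) (f : R) (u : R) (hu : u ∈ I) :
    pcc I f :=
  ⟨algebraMap R (AdjoinRoot (X ^ 2 - C f)) u * AdjoinRoot.root (X ^ 2 - C f),
    0, u, hu, by simp⟩

/-- The set `m_S = {a + b·t : a ∈ m, b ∈ I}` inside `A = R[T]/(T² − f)`. -/
def mSSet {R : Type*} [CommRing R] (m I : Ideal R) (f : R) :
    Set (AdjoinRoot (X ^ 2 - C f)) :=
  {x | ∃ a b : R, a ∈ m ∧ b ∈ I ∧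
    x = algebraMap R (AdjoinRoot (X ^ 2 - C f)) a +
        algebraMap R (AdjoinRoot (X ^ 2 - C f)) b * AdjoinRoot.root (X ^ 2 - C f)}

section Aux
variable {R : Type*} [CommRing R] (f : R)

lemma root_sq : AdjoinRoot.root (X ^ 2 - C f) ^ 2 =
    algebraMap R (AdjoinRoot (X ^ 2 - C f)) f := by
  have h := AdjoinRoot.eval₂_root (X ^ 2 - C f)
  simp only [eval₂_sub, eval₂_pow, eval₂_X, eval₂_C, sub_eq_zero] at h
  exact h

lemma repr_eq : ∀ a b : R,
    algebraMap R (AdjoinRoot (X ^ 2 - C f)) a +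
      algebraMap R (AdjoinRoot (X ^ 2 - C f)) b * AdjoinRoot.root (X ^ 2 - C f) =
    AdjoinRoot.mk (X ^ 2 - C f) (C a + C b * X) := by
  intro a b
  rw [map_add, map_mul, AdjoinRoot.mk_X]
  rfl

lemma repr_unique (a b : R)
    (h : algebraMap R (AdjoinRoot (X ^ 2 - C f)) a +
      algebraMap R (AdjoinRoot (X ^ 2 - C f)) b * AdjoinRoot.root (X ^ 2 - C f) = 0) :
    a = 0 ∧ b = 0 := by
  rcases subsingleton_or_nontrivial R with hR | hR
  · exact ⟨Subsingleton.elim _ _, Subsingleton.elim _ _⟩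
  rw [repr_eq] at h
  have hm : (X ^ 2 - C f).Monic := monic_X_pow_sub_C f two_ne_zero
  have hdvd : (X ^ 2 - C f) ∣ (C a + C b * X) := AdjoinRoot.mk_eq_zero.mp h
  have hp0 : C a + C b * X = 0 := by
    by_contra hne
    refine hm.not_dvd_of_natDegree_lt hne ?_ hdvd
    rw [natDegree_X_pow_sub_C]
    calc (C a + C b * X).natDegree ≤ max (C a).natDegree (C b * X).natDegree :=
          natDegree_add_le _ _
      _ ≤ 1 := by
          apply max_le (by simp)
          exact (natDegree_mul_le).trans (by simp [natDegree_X])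
      _ < 2 := one_lt_two
  constructor
  · have := congrArg (fun p => coeff p 0) hp0; simpa using this
  · have := congrArg (fun p => coeff p 1) hp0; simpa using this

end Aux

section Main
variable {R : Type*} [CommRing R]

/-- `m_S` as an ideal of `pcc I f`, given `I ≤ m`. -/
noncomputable def mSIdeal (m I : Ideal R) (hIm : I ≤ m) (f : R) :
    Ideal (pcc I f) where
  carrier := {s | (s : AdjoinRoot (X ^ 2 - C f)) ∈ mSSet m I f}
  zero_mem' := ⟨0, 0, m.zero_mem, I.zero_mem, by simp⟩
  add_mem' := by
    rintro x y ⟨a, b, ha, hb, hx⟩ ⟨c, d, hc, hd, hy⟩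
    refine ⟨a + c, b + d, m.add_mem ha hc, I.add_mem hb hd, ?_⟩
    show ((x : AdjoinRoot (X ^ 2 - C f)) + y) = _
    rw [hx, hy]
    simp only [map_add]; ring
  smul_mem' := by
    rintro c x ⟨p, q, hp, hq, hx⟩
    obtain ⟨a, b, hb, hc⟩ := c.2
    have hbqf : b * q * f ∈ m := m.mul_mem_right f (m.mul_mem_right q (hIm hb))
    refine ⟨a * p + b * q * f, a * q + b * p,
      m.add_mem (m.mul_mem_left a hp) hbqf,
      I.add_mem (I.mul_mem_left a hq) (I.mul_mem_right p hb), ?_⟩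
    show ((c : AdjoinRoot (X ^ 2 - C f)) * x) = _
    rw [hx, hc]
    simp only [map_add, map_mul]
    linear_combination (algebraMap R (AdjoinRoot (X ^ 2 - C f)) b *
      algebraMap R (AdjoinRoot (X ^ 2 - C f)) q) * root_sq f

end Main

/-- If `(R, m)` is local and `I ≠ R`, then `S(f)` is local with maximal
ideal `m_S = {a + b·t : a ∈ m, b ∈ I}`: `m_S` is a proper ideal of `S` and every element
of `S` not in `m_S` is a unit of `S`. -/
theorem statement1 {R : Type*} [CommRing R] [IsLocalRing R]
    (I : Ideal R) (hI : I ≠ ⊤) (f : R) :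
    ∃ mS : Ideal (pcc I f),
      Subtype.val '' (mS : Set (pcc I f)) = mSSet (IsLocalRing.maximalIdeal R) I f ∧
      mS ≠ ⊤ ∧
      ∀ s : pcc I f, s ∉ mS → IsUnit s := by
  have hIm : I ≤ IsLocalRing.maximalIdeal R := IsLocalRing.le_maximalIdeal hI
  set m := IsLocalRing.maximalIdeal R with hm
  refine ⟨mSIdeal m I hIm f, ?_, ?_, ?_⟩
  · ext x
    constructor
    · rintro ⟨s, hs, rfl⟩
      exact hs
    · rintro ⟨a, b, ha, hb, rfl⟩
      exact ⟨⟨_, a, b, hb, rfl⟩, ⟨a, b, ha, hb, rfl⟩, rfl⟩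
  · intro htop
    have h1 : (1 : pcc I f) ∈ mSIdeal m I hIm f := htop ▸ Submodule.mem_top
    obtain ⟨a, b, ha, hb, heq⟩ := h1
    have h0 : algebraMap R (AdjoinRoot (X ^ 2 - C f)) (a - 1) +
        algebraMap R (AdjoinRoot (X ^ 2 - C f)) b * AdjoinRoot.root (X ^ 2 - C f) = 0 := by
      have heq' : (1 : AdjoinRoot (X ^ 2 - C f)) = _ := heq
      rw [map_sub, map_one]
      linear_combination -heq'
    have := (repr_unique f _ _ h0).1
    have ha1 : a = 1 := sub_eq_zero.mp this
    exact (Ideal.ne_top_iff_one m).mp (IsLocalRing.maximalIdeal.isMaximal R).ne_top (ha1 ▸ ha)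
  · intro s hs
    obtain ⟨a, b, hb, hval⟩ := s.2
    have haR : a ∉ m := fun ha => hs ⟨a, b, ha, hb, hval⟩
    have ha : IsUnit a := by
      by_contra hcon
      exact haR ((IsLocalRing.mem_maximalIdeal a).mpr hcon)
    have hbm : b ∈ m := hIm hb
    have hu : IsUnit (a ^ 2 - b ^ 2 * f) := by
      by_contra hcon
      have h1 : a ^ 2 - b ^ 2 * f ∈ m := (IsLocalRing.mem_maximalIdeal _).mpr hcon
      have h3 : b ^ 2 * f ∈ m := m.mul_mem_right f (by rw [sq]; exact m.mul_mem_right b hbm)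
      have h2 : a ^ 2 ∈ m := by
        have h4 := m.add_mem h1 h3
        rwa [sub_add_cancel] at h4
      exact (IsLocalRing.mem_maximalIdeal _).mp h2 (ha.pow 2)
    obtain ⟨w, hw⟩ := hu
    set v : R := ((w⁻¹ : Rˣ) : R) with hv
    have hd : -(b * v) ∈ I := I.neg_mem (I.mul_mem_right v hb)
    set s' : pcc I f := ⟨algebraMap R (AdjoinRoot (X ^ 2 - C f)) (a * v) +
        algebraMap R (AdjoinRoot (X ^ 2 - C f)) (-(b * v)) * AdjoinRoot.root (X ^ 2 - C f),
      a * v, -(b * v), hd, rfl⟩ with hs'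
    have hone : algebraMap R (AdjoinRoot (X ^ 2 - C f)) ((a ^ 2 - b ^ 2 * f) * v) = 1 := by
      rw [← hw, ← Units.val_mul, mul_inv_cancel, Units.val_one, map_one]
    refine IsUnit.of_mul_eq_one (a := s) s' ?_
    apply Subtype.ext
    show (s : AdjoinRoot (X ^ 2 - C f)) * s' = 1
    rw [hval]
    simp only [map_mul, map_neg, map_sub, map_pow] at hone ⊢
    simp only [hs', map_mul, map_neg]
    linear_combination hone - (algebraMap R (AdjoinRoot (X ^ 2 - C f)) b *
      algebraMap R (AdjoinRoot (X ^ 2 - C f)) b *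
      algebraMap R (AdjoinRoot (X ^ 2 - C f)) v) * root_sq f
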